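/- arXiv:2508.02891 — 2 statements merged into one kernel-verified Lean document; each statement's English description precedes it below -/
import Mathlib

section
/- For all vectors z_1,…,z_9, w ∈ ℂ^4 the following two polynomial identities hold, where Y_x := ⟨789*21*56x⟩ denotes the chain polynomial with blocks (z_7,z_8,z_9), (z_2,z_1), (z_5,z_6,x) for a vector x: (i) ⟨127w⟩·Y_8 − ⟨128w⟩·Y_7 = ⟨1278⟩·⟨12w*65*789⟩, where ⟨12w*65*789⟩ is the chain polynomial with blocks (z_1,z_2,w), (z_6,z_5), (z_7,z_8,z_9); and (ii) ⟨567w⟩·Y_8 − ⟨568w⟩·Y_7 = ⟨5678⟩·Y_w. Here ⟨127w⟩ := det[z_1 z_2 z_7 w], ⟨128w⟩ := det[z_1 z_2 z_8 w], ⟨567w⟩ := det[z_5 z_6 z_7 w], ⟨568w⟩ := det[z_5 z_6 z_8 w]. -/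
noncomputable section

/-- `⟨u₁ u₂ u₃ u₄⟩ = det[u₁ u₂ u₃ u₄]`: the determinant of the `4 × 4` complex matrix with
columns `u₁, u₂, u₃, u₄` in the listed order. -/
def det4 (a b c d : Fin 4 → ℂ) : ℂ :=
  Matrix.det (Matrix.of fun i j => ![a, b, c, d] j i)

/-- The chain polynomial `⟨X * Y * U⟩` for blocks `X = (x₁,x₂,x₃)`, `Y = (y₁,y₂)`,
`U = (u₁,u₂,u₃)` of sizes `(3,2,3)`:
`Σ_{w ∈ S₂¹} sign(w)·det[x₁ x₂ x₃ y_{w(2)}]·det[y_{w(1)} u₁ u₂ u₃]`. -/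
def chain323 (x1 x2 x3 y1 y2 u1 u2 u3 : Fin 4 → ℂ) : ℂ :=
  det4 x1 x2 x3 y2 * det4 y1 u1 u2 u3 - det4 x1 x2 x3 y1 * det4 y2 u1 u2 u3

/-- The shuffle vector `(X * Y) ∈ ℂ⁴` for tuples `X = (x₁,x₂,x₃)`, `Y = (y₁,y₂)`
(`p + q = 5`): `Σ_j (−1)^{j−1}·det[x₁ x₂ x₃ y₁ ⋯ ŷ_j ⋯ y₂]·y_j`. -/
def shuf32 (x1 x2 x3 y1 y2 : Fin 4 → ℂ) : Fin 4 → ℂ :=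
  det4 x1 x2 x3 y2 • y1 - det4 x1 x2 x3 y1 • y2

/-- The shuffle vector `(X * Y) ∈ ℂ⁴` for tuples `X = (x₁,x₂)`, `Y = (y₁,y₂,y₃)`
(`p + q = 5`): `Σ_j (−1)^{j−1}·det[x₁ x₂ y₁ ⋯ ŷ_j ⋯ y₃]·y_j`. -/
def shuf23 (x1 x2 y1 y2 y3 : Fin 4 → ℂ) : Fin 4 → ℂ :=
  det4 x1 x2 y2 y3 • y1 - det4 x1 x2 y1 y3 • y2 + det4 x1 x2 y1 y2 • y3

/-- `A := Y₈₈` where `Y_{ij} := ⟨12i * 43 * 56j⟩`. -/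
def Aco (z1 z2 z3 z4 z5 z6 z7 z8 : Fin 4 → ℂ) : ℂ :=
  chain323 z1 z2 z8 z4 z3 z5 z6 z8

/-- `B := Y₇₈ + Y₈₇` where `Y_{ij} := ⟨12i * 43 * 56j⟩`. -/
def Bco (z1 z2 z3 z4 z5 z6 z7 z8 : Fin 4 → ℂ) : ℂ :=
  chain323 z1 z2 z7 z4 z3 z5 z6 z8 + chain323 z1 z2 z8 z4 z3 z5 z6 z7

/-- `C := Y₇₇` where `Y_{ij} := ⟨12i * 43 * 56j⟩`. -/
def Cco (z1 z2 z3 z4 z5 z6 z7 z8 : Fin 4 → ℂ) : ℂ :=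
  chain323 z1 z2 z7 z4 z3 z5 z6 z7

/-- `Y_x := ⟨789 * 21 * 56x⟩`: the chain polynomial with blocks `(z₇,z₈,z₉)`, `(z₂,z₁)`,
`(z₅,z₆,x)`. -/
def Ych (z1 z2 z5 z6 z7 z8 z9 x : Fin 4 → ℂ) : ℂ :=
  chain323 z7 z8 z9 z2 z1 z5 z6 x

@[simp] lemma cs2 : (Fin.castSucc 2 : Fin 4) = 2 := rfl

lemma det4_expand (a b c d : Fin 4 → ℂ) :
    det4 a b c d = a 0*b 1*c 2*d 3 - a 0*b 1*d 2*c 3 - a 0*c 1*b 2*d 3 + a 0*c 1*d 2*b 3 + a 0*d 1*b 2*c 3 - a 0*d 1*c 2*b 3 - b 0*a 1*c 2*d 3 + b 0*a 1*d 2*c 3 + b 0*c 1*a 2*d 3 - b 0*c 1*d 2*a 3 - b 0*d 1*a 2*c 3 + b 0*d 1*c 2*a 3 + c 0*a 1*b 2*d 3 - c 0*a 1*d 2*b 3 - c 0*b 1*a 2*d 3 + c 0*b 1*d 2*a 3 + c 0*d 1*a 2*b 3 - c 0*d 1*b 2*a 3 - d 0*a 1*b 2*c 3 + d 0*a 1*c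 2*b 3 + d 0*b 1*a 2*c 3 - d 0*b 1*c 2*a 3 - d 0*c 1*a 2*b 3 + d 0*c 1*b 2*a 3 := by
  rw [det4, Matrix.det_succ_row_zero]
  simp [Fin.sum_univ_succ, Matrix.det_fin_three, Matrix.submatrix, Fin.succAbove]
  ring

lemma pl_lemma (a b c d u w : Fin 4 → ℂ) :
    det4 a b c w * det4 u a b d - det4 a b d w * det4 u a b c
      = det4 a b c d * det4 u a b w := by
  simp only [det4_expand]; ring

lemma h1_lemma (z1 z2 z5 z6 z7 z8 w : Fin 4 → ℂ) :
    det4 z1 z2 z7 w * det4 z2 z5 z6 z8 - det4 z1 z2 z8 w * det4 z2 z5 z6 z7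
      = det4 z1 z2 z7 z8 * det4 z2 z5 z6 w - det4 w z2 z7 z8 * det4 z2 z5 z6 z1 := by
  simp only [det4_expand]; ring

lemma h2_lemma (z1 z2 z5 z6 z7 z8 w : Fin 4 → ℂ) :
    det4 z1 z2 z7 w * det4 z1 z5 z6 z8 - det4 z1 z2 z8 w * det4 z1 z5 z6 z7
      = det4 z1 z2 z7 z8 * det4 z1 z5 z6 w - det4 z1 w z7 z8 * det4 z1 z5 z6 z2 := by
  simp only [det4_expand]; ring

lemma h3_lemma (z1 z2 z5 z6 z7 z8 z9 w : Fin 4 → ℂ) :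
    det4 z7 z8 z9 z1 * det4 z2 z5 z6 w - det4 z7 z8 z9 z2 * det4 z1 z5 z6 w
      = det4 z6 z7 z8 z9 * det4 z1 z2 w z5 - det4 z5 z7 z8 z9 * det4 z1 z2 w z6
        - det4 z7 z8 z9 w * det4 z1 z5 z6 z2 := by
  simp only [det4_expand]; ring

lemma h4_lemma (z1 z2 z7 z8 z9 w : Fin 4 → ℂ) :
    det4 z1 z2 z7 z8 * det4 z7 z8 z9 w
      = det4 z7 z8 z9 z1 * det4 w z2 z7 z8 + det4 z7 z8 z9 z2 * det4 z1 w z7 z8 := by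
  simp only [det4_expand]; ring

lemma h5_lemma (z1 z2 z5 z6 : Fin 4 → ℂ) :
    det4 z2 z5 z6 z1 = - det4 z1 z5 z6 z2 := by
  simp only [det4_expand]; ring

/-- For all vectors `z₁, …, z₉, w ∈ ℂ⁴`, with
`Y_x := ⟨789 * 21 * 56x⟩`:
(i) `⟨127w⟩·Y₈ − ⟨128w⟩·Y₇ = ⟨1278⟩·⟨12w * 65 * 789⟩`;
(ii) `⟨567w⟩·Y₈ − ⟨568w⟩·Y₇ = ⟨5678⟩·Y_w`. -/
theorem identities_for_Y (z1 z2 z3 z4 z5 z6 z7 z8 z9 w : Fin 4 → ℂ) :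
    (det4 z1 z2 z7 w * Ych z1 z2 z5 z6 z7 z8 z9 z8
        - det4 z1 z2 z8 w * Ych z1 z2 z5 z6 z7 z8 z9 z7
      = det4 z1 z2 z7 z8 * chain323 z1 z2 w z6 z5 z7 z8 z9) ∧
    (det4 z5 z6 z7 w * Ych z1 z2 z5 z6 z7 z8 z9 z8
        - det4 z5 z6 z8 w * Ych z1 z2 z5 z6 z7 z8 z9 z7
      = det4 z5 z6 z7 z8 * Ych z1 z2 z5 z6 z7 z8 z9 w) := by
  constructor
  · simp only [Ych, chain323]
    linear_combination det4 z7 z8 z9 z1 * h1_lemma z1 z2 z5 z6 z7 z8 w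
      - det4 z7 z8 z9 z2 * h2_lemma z1 z2 z5 z6 z7 z8 w
      + det4 z1 z2 z7 z8 * h3_lemma z1 z2 z5 z6 z7 z8 z9 w
      - det4 z7 z8 z9 z1 * det4 w z2 z7 z8 * h5_lemma z1 z2 z5 z6
      - det4 z1 z5 z6 z2 * h4_lemma z1 z2 z7 z8 z9 w
  · simp only [Ych, chain323]
    linear_combination det4 z7 z8 z9 z1 * pl_lemma z5 z6 z7 z8 z2 w
      - det4 z7 z8 z9 z2 * pl_lemma z5 z6 z7 z8 z1 w

end
end

section
/- For all vectors z_1,…,z_9 ∈ ℂ^4 the following polynomial identity holds: A·Y_7² − B·Y_7·Y_8 + C·Y_8² = −⟨1278⟩·⟨5678⟩·⟨((789*12), z_5, z_6) * (z_3, z_4) * (z_1, z_2, (56*789))⟩, where Y_i := ⟨789*21*56i⟩ is the chain polynomial with blocks (z_7,z_8,z_9), (z_2,z_1), (z_5,z_6,z_i); the right-hand factor is the chain polynomial whose three blocks are the triple ((789*12), z_5, z_6), the pair (z_3,z_4), and the triple (z_1, z_2, (56*789)); and (789*12) and (56*789) are the shuffle vectors associated with the tuples ((z_7,z_8,z_9),(z_1,z_2))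 and ((z_5,z_6),(z_7,z_8,z_9)) respectively. -/
noncomputable section

/-- Explicit Leibniz expansion of `det4`. -/
lemma det4_eq (a b c d : Fin 4 → ℂ) :
    det4 a b c d =
      a 0 * b 1 * c 2 * d 3 - a 0 * b 1 * c 3 * d 2 - a 0 * b 2 * c 1 * d 3
      + a 0 * b 2 * c 3 * d 1 + a 0 * b 3 * c 1 * d 2 - a 0 * b 3 * c 2 * d 1
      - a 1 * b 0 * c 2 * d 3 + a 1 * b 0 * c 3 * d 2 + a 1 * b 2 * c 0 * d 3
      - a 1 * b 2 * c 3 * d 0 - a 1 * b 3 * c 0 * d 2 + a 1 * b 3 * c 2 * d 0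
      + a 2 * b 0 * c 1 * d 3 - a 2 * b 0 * c 3 * d 1 - a 2 * b 1 * c 0 * d 3
      + a 2 * b 1 * c 3 * d 0 + a 2 * b 3 * c 0 * d 1 - a 2 * b 3 * c 1 * d 0
      - a 3 * b 0 * c 1 * d 2 + a 3 * b 0 * c 2 * d 1 + a 3 * b 1 * c 0 * d 2
      - a 3 * b 1 * c 2 * d 0 - a 3 * b 2 * c 0 * d 1 + a 3 * b 2 * c 1 * d 0 := by
  have h1 : (Fin.succ 2 : Fin 4) = 3 := rfl
  have h2 : (Fin.castSucc 2 : Fin 4) = 2 := rfl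
  rw [det4, Matrix.det_succ_row_zero]
  simp [Fin.sum_univ_succ, Matrix.det_fin_three, Matrix.submatrix_apply, Fin.succAbove]
  ring

/-- Linearity of `det4` in the third slot. -/
lemma det4_lin3 (x y u v w : Fin 4 → ℂ) (a b : ℂ) :
    det4 x y (a • u - b • v) w = a * det4 x y u w - b * det4 x y v w := by
  simp only [det4_eq, Pi.sub_apply, Pi.smul_apply, smul_eq_mul]; ring

/-- Linearity of `det4` in the fourth slot. -/
lemma det4_lin4 (x y w u v : Fin 4 → ℂ) (a b : ℂ) :
    det4 x y w (a • u - b • v) = a * det4 x y w u - b * det4 x y w v := by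
  simp only [det4_eq, Pi.sub_apply, Pi.smul_apply, smul_eq_mul]; ring

/-- Linearity of `det4` in the fourth slot, three-term version. -/
lemma det4_lin4' (x y w u v u3 : Fin 4 → ℂ) (a b c : ℂ) :
    det4 x y w (a • u - b • v + c • u3)
      = a * det4 x y w u - b * det4 x y w v + c * det4 x y w u3 := by
  simp only [det4_eq, Pi.sub_apply, Pi.add_apply, Pi.smul_apply, smul_eq_mul]; ring

/-- `det4` vanishes on a repeated column (slots 1 and 3). -/
lemma det4_aba (a b c : Fin 4 → ℂ) : det4 a b a c = 0 := by
  simp only [det4_eq]; ring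

/-- `det4` vanishes on a repeated column (slots 2 and 3). -/
lemma det4_abb (a b c : Fin 4 → ℂ) : det4 a b b c = 0 := by
  simp only [det4_eq]; ring

/-- Antisymmetry of `det4`: swapping slots 1 and 4. -/
lemma det4_swap14 (a b c d : Fin 4 → ℂ) : det4 a b c d = -det4 d b c a := by
  simp only [det4_eq]; ring

/-- Antisymmetry of `det4`: cyclic shift. -/
lemma det4_cyc' (a b c d : Fin 4 → ℂ) : det4 a b c d = -det4 b c d a := by
  simp only [det4_eq]; ring

/-- A Grassmann–Plücker relation. -/
lemma pluecker (x z5 z6 z7 z8 z9 : Fin 4 → ℂ) :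
    det4 z5 z6 z8 z9 * det4 x z5 z6 z7 - det4 z5 z6 z7 z9 * det4 x z5 z6 z8
      + det4 z5 z6 z7 z8 * det4 x z5 z6 z9 = 0 := by
  simp only [det4_eq]; ring

private lemma cramer5s_0 (v x y z w : Fin 4 → ℂ) :
    det4 x y z w * v 0
      = det4 v y z w * x 0 - det4 v x z w * y 0 + det4 v x y w * z 0 - det4 v x y z * w 0 := by
  simp only [det4_eq]; ring

private lemma cramer5t_0 (v x y z w : Fin 4 → ℂ) :
    det4 x y z w * v 0
      = det4 v y z w * x 0 - det4 v x z w * y 0 - det4 x y w v * z 0 + det4 x y z v * w 0 := by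
  simp only [det4_eq]; ring

private lemma cramer5s_1 (v x y z w : Fin 4 → ℂ) :
    det4 x y z w * v 1
      = det4 v y z w * x 1 - det4 v x z w * y 1 + det4 v x y w * z 1 - det4 v x y z * w 1 := by
  simp only [det4_eq]; ring

private lemma cramer5t_1 (v x y z w : Fin 4 → ℂ) :
    det4 x y z w * v 1
      = det4 v y z w * x 1 - det4 v x z w * y 1 - det4 x y w v * z 1 + det4 x y z v * w 1 := by
  simp only [det4_eq]; ring

private lemma cramer5s_2 (v x y z w : Fin 4 → ℂ) :
    det4 x y z w * v 2
      = det4 v y z w * x 2 - det4 v x z w * y 2 + det4 v x y w * z 2 - det4 v x y z * w 2 := by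
  simp only [det4_eq]; ring

private lemma cramer5t_2 (v x y z w : Fin 4 → ℂ) :
    det4 x y z w * v 2
      = det4 v y z w * x 2 - det4 v x z w * y 2 - det4 x y w v * z 2 + det4 x y z v * w 2 := by
  simp only [det4_eq]; ring

private lemma cramer5s_3 (v x y z w : Fin 4 → ℂ) :
    det4 x y z w * v 3
      = det4 v y z w * x 3 - det4 v x z w * y 3 + det4 v x y w * z 3 - det4 v x y z * w 3 := by
  simp only [det4_eq]; ring

private lemma cramer5t_3 (v x y z w : Fin 4 → ℂ) :
    det4 x y z w * v 3
      = det4 v y z w * x 3 - det4 v x z w * y 3 - det4 x y w v * z 3 + det4 x y z v * w 3 := by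
  simp only [det4_eq]; ring

/-- Five-term Cramer relation. -/
lemma cramer5s (v x y z w : Fin 4 → ℂ) (i : Fin 4) :
    det4 x y z w * v i
      = det4 v y z w * x i - det4 v x z w * y i + det4 v x y w * z i - det4 v x y z * w i := by
  fin_cases i
  · exact cramer5s_0 v x y z w
  · exact cramer5s_1 v x y z w
  · exact cramer5s_2 v x y z w
  · exact cramer5s_3 v x y z w

/-- Five-term Cramer relation, variant column ordering. -/
lemma cramer5s' (v x y z w : Fin 4 → ℂ) (i : Fin 4) :
    det4 x y z w * v i
      = det4 v y z w * x i - det4 v x z w * y i - det4 x y w v * z i + det4 x y z v * w i := by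
  fin_cases i
  · exact cramer5t_0 v x y z w
  · exact cramer5t_1 v x y z w
  · exact cramer5t_2 v x y z w
  · exact cramer5t_3 v x y z w

/-- A three-term Grassmann–Plücker relation. -/
lemma gp3 (u z1 z2 z7 z8 z9 : Fin 4 → ℂ) :
    det4 z7 z8 z9 z2 * det4 z1 u z7 z8 - det4 z7 z8 z9 z1 * det4 z2 u z7 z8
      - det4 z1 z2 z7 z8 * det4 z9 u z7 z8 = 0 := by
  simp only [det4_eq]; ring

/-- Key vector identity: `Y₇•z₈ − Y₈•z₇ = ⟨5678⟩•(789*12) − ⟨1278⟩•(56*789)`. -/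
lemma key_W (z1 z2 z5 z6 z7 z8 z9 : Fin 4 → ℂ) :
    Ych z1 z2 z5 z6 z7 z8 z9 z7 • z8 - Ych z1 z2 z5 z6 z7 z8 z9 z8 • z7
      = det4 z5 z6 z7 z8 • shuf32 z7 z8 z9 z1 z2
        - det4 z1 z2 z7 z8 • shuf23 z5 z6 z7 z8 z9 := by
  funext i
  have c1 := cramer5s z1 z5 z6 z7 z8 i
  have c2 := cramer5s z2 z5 z6 z7 z8 i
  have c9 := cramer5s' z9 z5 z6 z7 z8 i
  have g5 := gp3 z6 z1 z2 z7 z8 z9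
  have g6 := gp3 z5 z1 z2 z7 z8 z9
  simp only [Ych, chain323, shuf32, shuf23, Pi.sub_apply, Pi.add_apply, Pi.smul_apply,
    smul_eq_mul]
  linear_combination (-(det4 z7 z8 z9 z2)) * c1 + det4 z7 z8 z9 z1 * c2
    + det4 z1 z2 z7 z8 * c9 - z5 i * g5 + z6 i * g6

set_option maxHeartbeats 1000000 in
/-- For all vectors `z₁, …, z₉ ∈ ℂ⁴`:
`A·Y₇² − B·Y₇·Y₈ + C·Y₈²
  = −⟨1278⟩·⟨5678⟩·⟨((789*12), z₅, z₆) * (z₃, z₄) * (z₁, z₂, (56*789))⟩`,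
where the right-hand factor is the chain polynomial whose three blocks are the triple
`((789*12), z₅, z₆)`, the pair `(z₃, z₄)`, and the triple `(z₁, z₂, (56*789))`, and
`(789*12)` and `(56*789)` are the indicated shuffle vectors. -/
theorem identity_quadratic_in_Y7_Y8 (z1 z2 z3 z4 z5 z6 z7 z8 z9 : Fin 4 → ℂ) :
    Aco z1 z2 z3 z4 z5 z6 z7 z8 * Ych z1 z2 z5 z6 z7 z8 z9 z7 ^ 2
      - Bco z1 z2 z3 z4 z5 z6 z7 z8 * Ych z1 z2 z5 z6 z7 z8 z9 z7 *
          Ych z1 z2 z5 z6 z7 z8 z9 z8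
      + Cco z1 z2 z3 z4 z5 z6 z7 z8 * Ych z1 z2 z5 z6 z7 z8 z9 z8 ^ 2
    = -(det4 z1 z2 z7 z8 * det4 z5 z6 z7 z8 *
        chain323 (shuf32 z7 z8 z9 z1 z2) z5 z6 z3 z4 z1 z2 (shuf23 z5 z6 z7 z8 z9)) := by
  have hW := key_W z1 z2 z5 z6 z7 z8 z9
  have hP3 : det4 z1 z2 (shuf32 z7 z8 z9 z1 z2) z3 = 0 := by
    simp only [shuf32, det4_lin3, det4_aba, det4_abb]; ring
  have hP4 : det4 z1 z2 (shuf32 z7 z8 z9 z1 z2) z4 = 0 := by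
    simp only [shuf32, det4_lin3, det4_aba, det4_abb]; ring
  have hQ3 : det4 z3 z5 z6 (shuf23 z5 z6 z7 z8 z9) = 0 := by
    simp only [shuf23, det4_lin4']
    linear_combination pluecker z3 z5 z6 z7 z8 z9
  have hQ4 : det4 z4 z5 z6 (shuf23 z5 z6 z7 z8 z9) = 0 := by
    simp only [shuf23, det4_lin4']
    linear_combination pluecker z4 z5 z6 z7 z8 z9
  have stepA : Aco z1 z2 z3 z4 z5 z6 z7 z8 * Ych z1 z2 z5 z6 z7 z8 z9 z7 ^ 2
      - Bco z1 z2 z3 z4 z5 z6 z7 z8 * Ych z1 z2 z5 z6 z7 z8 z9 z7 *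
          Ych z1 z2 z5 z6 z7 z8 z9 z8
      + Cco z1 z2 z3 z4 z5 z6 z7 z8 * Ych z1 z2 z5 z6 z7 z8 z9 z8 ^ 2
      = det4 z1 z2 (Ych z1 z2 z5 z6 z7 z8 z9 z7 • z8 - Ych z1 z2 z5 z6 z7 z8 z9 z8 • z7) z3
          * det4 z4 z5 z6
              (Ych z1 z2 z5 z6 z7 z8 z9 z7 • z8 - Ych z1 z2 z5 z6 z7 z8 z9 z8 • z7)
        - det4 z1 z2 (Ych z1 z2 z5 z6 z7 z8 z9 z7 • z8 - Ych z1 z2 z5 z6 z7 z8 z9 z8 • z7) z4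
          * det4 z3 z5 z6
              (Ych z1 z2 z5 z6 z7 z8 z9 z7 • z8 - Ych z1 z2 z5 z6 z7 z8 z9 z8 • z7) := by
    simp only [det4_lin3, det4_lin4, Aco, Bco, Cco, Ych, chain323]
    ring
  rw [stepA, hW]
  simp only [det4_lin3, det4_lin4, hP3, hP4, hQ3, hQ4, chain323]
  rw [det4_swap14 (shuf32 z7 z8 z9 z1 z2) z5 z6 z4,
    det4_swap14 (shuf32 z7 z8 z9 z1 z2) z5 z6 z3,
    det4_cyc' z3 z1 z2 (shuf23 z5 z6 z7 z8 z9),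
    det4_cyc' z4 z1 z2 (shuf23 z5 z6 z7 z8 z9)]
  ring

end
end
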